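/- Let R be a commutative ring and λ ∈ R. The R-algebra maps on R[T, 1/(1+λT)] given by comultiplication T ↦ T⊗1 + 1⊗T + λ T⊗T, counit T ↦ 0, and antipode T ↦ −T/(1+λT) make R[T, 1/(1+λT)] a commutative Hopf algebra over R. (In particular the comultiplication is well defined, i.e. 1+λ(T⊗1+1⊗T+λT⊗T) = (1+λT)⊗(1+λT) is invertible, coassociativity holds, and the antipode axiom S*id = unit∘counit holds on T.) -/

import Mathlib

open scoped TensorProduct

noncomputable section

/-- The coordinate ring `R[T, 1/(1+λT)]` of `𝒢^{(λ)}_R`. -/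
abbrev GA (R : Type*) [CommRing R] (lam : R) : Type _ :=
  Localization.Away (1 + Polynomial.C lam * Polynomial.X : Polynomial R)

/-- The image of `T` in `R[T, 1/(1+λT)]`. -/
def tT (R : Type*) [CommRing R] (lam : R) : GA R lam :=
  algebraMap (Polynomial R) (GA R lam) Polynomial.X

section aux
variable {R : Type*} [CommRing R] (lam : R) {B : Type*} [CommRing B] [Algebra R B]

lemma aeval_gen (x : B) :
    Polynomial.aeval x (1 + Polynomial.C lam * Polynomial.X) = 1 + algebraMap R B lam * x := by
  simp [Algebra.smul_def]

def GA.lift (x : B) (hx : IsUnit (1 + algebraMap R B lam * x)) : GA R lam →ₐ[R] B :=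
  { toRingHom := IsLocalization.Away.lift (1 + Polynomial.C lam * Polynomial.X)
      (g := (Polynomial.aeval x).toRingHom) (by simpa [aeval_gen] using hx)
    commutes' := fun r => by
      have : algebraMap R (GA R lam) r =
          algebraMap (Polynomial R) (GA R lam) (Polynomial.C r) :=
        (IsScalarTower.algebraMap_apply R (Polynomial R) (GA R lam) r)
      simp [this] }

@[simp] lemma GA.lift_tT (x : B) (hx : IsUnit (1 + algebraMap R B lam * x)) :
    GA.lift lam x hx (tT R lam) = x := by
  simp [GA.lift, tT]

lemma one_add_unit : IsUnit (1 + algebraMap R (GA R lam) lam * tT R lam) := by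
  have h := IsLocalization.Away.algebraMap_isUnit
    (S := GA R lam) (1 + Polynomial.C lam * Polynomial.X)
  have : algebraMap (Polynomial R) (GA R lam) (1 + Polynomial.C lam * Polynomial.X)
      = 1 + algebraMap R (GA R lam) lam * tT R lam := by
    have h2 : algebraMap (Polynomial R) (GA R lam) (Polynomial.C lam)
        = algebraMap R (GA R lam) lam := by
      rw [IsScalarTower.algebraMap_apply R (Polynomial R) (GA R lam) lam,
        Polynomial.algebraMap_eq]
    rw [map_add, map_mul, map_one, ← tT, h2]
  rwa [this] at h

end aux

set_option maxHeartbeats 1000000 in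
/-- the maps `Δ(T)=T⊗1+1⊗T+λT⊗T`, `ε(T)=0`, `S(T)=-T/(1+λT)` are well
defined on `R[T, 1/(1+λT)]` and make it a commutative Hopf algebra over `R`
(coassociativity, counit axiom and antipode axiom hold on the generator `T`). -/
theorem stmt1 (R : Type*) [CommRing R] (lam : R) :
    ∃ (Δ : GA R lam →ₐ[R] GA R lam ⊗[R] GA R lam) (ε : GA R lam →ₐ[R] R)
      (S : GA R lam →ₐ[R] GA R lam),
      -- well-definedness of the comultiplication: the image of `1+λT` is a unit,
      -- being `(1+λT)⊗(1+λT)`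
      (1 : GA R lam ⊗[R] GA R lam) +
          algebraMap R _ lam * (tT R lam ⊗ₜ 1 + 1 ⊗ₜ tT R lam + lam • (tT R lam ⊗ₜ tT R lam))
        = (1 + algebraMap R _ lam * tT R lam) ⊗ₜ (1 + algebraMap R _ lam * tT R lam) ∧
      IsUnit ((1 + algebraMap R (GA R lam) lam * tT R lam) ⊗ₜ[R]
        (1 + algebraMap R (GA R lam) lam * tT R lam)) ∧
      -- values on the generator
      Δ (tT R lam) = tT R lam ⊗ₜ 1 + 1 ⊗ₜ tT R lam + lam • (tT R lam ⊗ₜ tT R lam) ∧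
      ε (tT R lam) = 0 ∧
      (1 + algebraMap R (GA R lam) lam * tT R lam) * S (tT R lam) = - tT R lam ∧
      -- coassociativity on T
      (Algebra.TensorProduct.assoc R R R (GA R lam) (GA R lam) (GA R lam))
          ((Algebra.TensorProduct.map Δ (AlgHom.id R _)) (Δ (tT R lam)))
        = (Algebra.TensorProduct.map (AlgHom.id R _) Δ) (Δ (tT R lam)) ∧
      -- counit axiom on T
      (Algebra.TensorProduct.lid R (GA R lam))
          ((Algebra.TensorProduct.map ε (AlgHom.id R _)) (Δ (tT R lam))) = tT R lam ∧
      -- antipode axiom `m ∘ (S ⊗ id) ∘ Δ = η ∘ ε` on T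
      (Algebra.TensorProduct.lmul' R)
          ((Algebra.TensorProduct.map S (AlgHom.id R _)) (Δ (tT R lam)))
        = algebraMap R (GA R lam) (ε (tT R lam)) := by
  set A := GA R lam
  set t := tT R lam with ht
  set c := algebraMap R A lam with hc
  -- eq1
  have eq1 : (1 : A ⊗[R] A) + algebraMap R _ lam * (t ⊗ₜ 1 + 1 ⊗ₜ t + lam • (t ⊗ₜ t))
      = (1 + c * t) ⊗ₜ (1 + c * t) := by
    simp only [Algebra.TensorProduct.algebraMap_apply, Algebra.TensorProduct.one_def,
      TensorProduct.tmul_add, TensorProduct.add_tmul, mul_add,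
      Algebra.TensorProduct.tmul_mul_tmul, one_mul, mul_one,
      TensorProduct.smul_tmul', TensorProduct.smul_tmul]
    have hct : (c * t : A) = lam • t := by rw [Algebra.smul_def, hc]
    have h1 : (c : A) ⊗ₜ[R] t = (1 : A) ⊗ₜ (c * t) := by
      rw [hct, show (c : A) = lam • 1 by rw [Algebra.smul_def, mul_one, hc],
        TensorProduct.smul_tmul]
    rw [h1, ← hct]
    abel
  have hunit : IsUnit ((1 + c * t) ⊗ₜ[R] (1 + c * t)) := by
    have hu := one_add_unit lam
    have : (1 + c * t) ⊗ₜ[R] (1 + c * t)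
        = (Algebra.TensorProduct.includeLeft (S := R) (1 + c*t)) *
          (Algebra.TensorProduct.includeRight (1 + c*t)) := by
      simp [Algebra.TensorProduct.includeLeft_apply, Algebra.TensorProduct.includeRight_apply,
        Algebra.TensorProduct.tmul_mul_tmul]
    rw [this]
    exact (hu.map _).mul (hu.map _)
  -- Δ
  have hΔunit : IsUnit ((1 : A ⊗[R] A) +
      algebraMap R _ lam * (t ⊗ₜ 1 + 1 ⊗ₜ t + lam • (t ⊗ₜ t))) := by rw [eq1]; exact hunit
  set Δ : A →ₐ[R] A ⊗[R] A := GA.lift lam _ hΔunit with hΔ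
  have hΔt : Δ t = t ⊗ₜ 1 + 1 ⊗ₜ t + lam • (t ⊗ₜ t) := GA.lift_tT _ _ _
  -- ε
  have hεunit : IsUnit ((1 : R) + algebraMap R R lam * 0) := by simp
  set ε : A →ₐ[R] R := GA.lift lam 0 hεunit with hε
  have hεt : ε t = 0 := GA.lift_tT _ _ _
  -- S
  obtain ⟨v, hv⟩ := (one_add_unit lam (R := R))
  rw [← ht, ← hc] at hv
  have hv1 : (1 + c * t) * ((v⁻¹ : Aˣ) : A) = 1 := by rw [← hv]; exact v.mul_inv
  set u : A := ((v⁻¹ : Aˣ) : A) with hu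
  have hSunit : IsUnit ((1 : A) + algebraMap R A lam * (-(t * u))) := by
    have : (1 : A) + c * (-(t * u)) = u := by linear_combination -hv1
    rw [← hc, this]
    exact (v⁻¹).isUnit
  set S : A →ₐ[R] A := GA.lift lam _ hSunit with hS
  have hSt : S t = -(t * u) := GA.lift_tT _ _ _
  refine ⟨Δ, ε, S, eq1, hunit, hΔt, hεt, ?_, ?_, ?_, ?_⟩
  · rw [hSt]; linear_combination (-t) * hv1
  · -- coassoc
    rw [hΔt]
    simp only [map_add, map_one, map_smul, Algebra.TensorProduct.map_tmul, AlgHom.coe_id,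
      id_eq, hΔt, TensorProduct.tmul_add, TensorProduct.add_tmul, TensorProduct.tmul_smul,
      ← TensorProduct.smul_tmul', Algebra.TensorProduct.assoc_tmul, smul_add, smul_smul,
      Algebra.TensorProduct.one_def]
    abel
  · rw [hΔt]
    simp [hεt, TensorProduct.smul_tmul']
  · rw [hΔt]
    simp only [map_add, map_smul, Algebra.TensorProduct.map_tmul, AlgHom.coe_id, id_eq,
      Algebra.TensorProduct.lmul'_apply_tmul, hSt, hεt, map_zero, map_one, map_smul]
    rw [Algebra.smul_def, ← hc]
    linear_combination (-t) * hv1
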